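/- Fix real numbers δ' with 0 < δ' < 1/4 and r with 0 < r < 7/128, and ε ≤ δ'/8. Let S = {x + yi ∈ ℂ : |x| ≤ 1/4, |y| ≤ δ'}. Then for any z ∈ ℂ with |z − 2| ≤ r and |Im z| ≤ ε, and any w ∈ S, the point w₁ = w⁴ + 4(2 − z) lies in the interior of S, i.e., |Re w₁| < 1/4 and |Im w₁| < δ'. -/

import Mathlib

set_option maxHeartbeats 800000


/-- The square `S = {|Re w| ≤ 1/4, |Im w| ≤ δ'}` is mapped into its interior by
`w ↦ w⁴ + 4(2 - z)` when `|z - 2| ≤ r < 7/128` and `|Im z| ≤ ε ≤ δ'/8`. -/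
theorem stmt7 (δ' r ε : ℝ) (hδ : 0 < δ') (hδ' : δ' < 1 / 4)
    (hr : 0 < r) (hr' : r < 7 / 128) (hε : ε ≤ δ' / 8)
    (z w : ℂ) (hz : ‖z - 2‖ ≤ r) (hzim : |z.im| ≤ ε)
    (hu : |w.re| ≤ 1 / 4) (hv : |w.im| ≤ δ') :
    |(w ^ 4 + 4 * (2 - z)).re| < 1 / 4 ∧ |(w ^ 4 + 4 * (2 - z)).im| < δ' := by
  set u := w.re
  set v := w.im
  have hzre : |z.re - 2| ≤ r := by
    have := Complex.abs_re_le_norm (z - 2)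
    simpa using this.trans hz
  have hre : (w ^ 4 + 4 * (2 - z)).re
      = u ^ 4 - 6 * u ^ 2 * v ^ 2 + v ^ 4 + 4 * (2 - z.re) := by
    simp [pow_succ, Complex.mul_re, Complex.mul_im, Complex.sub_re, Complex.sub_im]
    ring
  have him : (w ^ 4 + 4 * (2 - z)).im
      = 4 * u ^ 3 * v - 4 * u * v ^ 3 - 4 * z.im := by
    simp [pow_succ, Complex.mul_re, Complex.mul_im, Complex.sub_re, Complex.sub_im]
    ring
  obtain ⟨hz1, hz2⟩ := abs_le.mp hzre
  obtain ⟨hi1, hi2⟩ := abs_le.mp hzim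
  have huu : u ^ 2 ≤ 1 / 16 := by nlinarith [abs_le.mp hu, sq_abs u, sq_nonneg (|u| - 1/4)]
  have hvv : v ^ 2 ≤ δ' ^ 2 := by
    have := sq_abs v
    nlinarith [abs_nonneg v, abs_le.mp hv]
  have hδ2 : δ' ^ 2 < 1 / 16 := by nlinarith
  have h4 : u ^ 2 * v ^ 2 ≤ (1 / 16) * δ' ^ 2 :=
    mul_le_mul huu hvv (sq_nonneg v) (by norm_num)
  have hu4 : u ^ 4 ≤ 1 / 256 := by
    have := pow_le_pow_left₀ (sq_nonneg u) huu 2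
    calc u ^ 4 = (u ^ 2) ^ 2 := by ring
    _ ≤ (1 / 16 : ℝ) ^ 2 := this
    _ = 1 / 256 := by norm_num
  have hv4 : v ^ 4 ≤ δ' ^ 4 := by
    have := pow_le_pow_left₀ (sq_nonneg v) hvv 2
    calc v ^ 4 = (v ^ 2) ^ 2 := by ring
    _ ≤ (δ' ^ 2) ^ 2 := this
    _ = δ' ^ 4 := by ring
  have hδ4 : δ' ^ 4 < 1 / 256 := by nlinarith [sq_nonneg δ', sq_nonneg (δ' ^ 2)]
  have hnn : 0 ≤ u ^ 2 * v ^ 2 := by positivity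
  constructor
  · rw [hre, abs_lt]
    constructor
    · nlinarith [sq_nonneg (u^2), sq_nonneg (v^2)]
    · nlinarith [sq_nonneg (u^2), sq_nonneg (v^2)]
  · rw [him]
    have A : |4 * u ^ 3 * v| ≤ δ' / 16 := by
      have h1 : |u| ^ 3 * |v| ≤ (1/4) ^ 3 * δ' :=
        mul_le_mul (pow_le_pow_left₀ (abs_nonneg u) hu 3) hv (abs_nonneg v) (by positivity)
      have h2 : |4 * u ^ 3 * v| = 4 * (|u| ^ 3 * |v|) := by
        rw [abs_mul, abs_mul, abs_pow]
        norm_num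
        ring
      rw [h2]; linarith
    have B : |4 * u * v ^ 3| ≤ δ' / 16 := by
      have h1 : |u| * |v| ^ 3 ≤ (1/4) * δ' ^ 3 :=
        mul_le_mul hu (pow_le_pow_left₀ (abs_nonneg v) hv 3) (by positivity) (by norm_num)
      have h2 : |4 * u * v ^ 3| = 4 * (|u| * |v| ^ 3) := by
        rw [abs_mul, abs_mul, abs_pow]
        norm_num
        ring
      have h3 : δ' ^ 3 ≤ δ' / 16 := by nlinarith
      rw [h2]; linarith
    obtain ⟨A1, A2⟩ := abs_le.mp A
    obtain ⟨B1, B2⟩ := abs_le.mp B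
    rw [abs_lt]
    constructor <;> nlinarith
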